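/- Let N₁,...,Nₘ be i.i.d. with mean 0, variance σ², and finite fourth moment, Zᵢ = xᵢ + Nᵢ with deterministic xᵢ. For fixed constants a, b, the empirical average estimated loss (1/m)Σᵢ[(Zᵢ-(aZᵢ+b))² + 2aσ²] converges in probability, as m → ∞, to the limit of (1/m)Σᵢ E[(xᵢ - (aZᵢ+b))²] + σ², provided the per-pixel expectations Cesàro-converge (e.g., the sequence ((1-a)xᵢ - b)² Cesàro-converges). -/

import Mathlib

open MeasureTheory ProbabilityTheory Filter

/-- pointwise polynomial bound used for the square of the loss term -/
lemma stmt17_aux_ptwise (W e d w n : ℝ) (hw : |w| ≤ W) :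
    ((w + d * n) ^ 2 + e) ^ 2
      ≤ (2 * (2 * W ^ 2 + |e|) ^ 2 + 2 * (2 * d ^ 2) ^ 2) * (1 + n ^ 4) := by
  set P := 2 * W ^ 2 + |e| with hP
  set Q := 2 * d ^ 2 with hQ
  have hw2 : w ^ 2 ≤ W ^ 2 := by
    have := abs_nonneg w
    nlinarith [sq_abs w]
  have he : e ≤ |e| := le_abs_self e
  have he' : -|e| ≤ e := neg_abs_le e
  have h1 : |(w + d * n) ^ 2 + e| ≤ P + Q * n ^ 2 := by
    rw [abs_le]
    constructor
    · nlinarith [sq_nonneg (w + d * n), sq_nonneg (d * n), sq_nonneg n, abs_nonneg e]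
    · nlinarith [sq_nonneg (w - d * n), sq_nonneg (d * n), sq_nonneg n]
  have h2 : ((w + d * n) ^ 2 + e) ^ 2 ≤ (P + Q * n ^ 2) ^ 2 := by
    have h0 : -(P + Q * n ^ 2) ≤ (w + d * n) ^ 2 + e := by
      have := (abs_le.1 h1).1; linarith
    have h0' : (w + d * n) ^ 2 + e ≤ P + Q * n ^ 2 := (abs_le.1 h1).2
    exact sq_le_sq' h0 h0'
  have h3 : (P + Q * n ^ 2) ^ 2 ≤ (2 * P ^ 2 + 2 * Q ^ 2) * (1 + n ^ 4) := by
    nlinarith [sq_nonneg (P - Q * n ^ 2), sq_nonneg (P * n ^ 2), sq_nonneg Q, sq_nonneg (n ^ 2),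
      sq_nonneg P]
  linarith

theorem stmt17 {Ω : Type*} [MeasurableSpace Ω] (μ : Measure Ω) [IsProbabilityMeasure μ]
    (N : ℕ → Ω → ℝ) (x : ℕ → ℝ) (σ2 a b c : ℝ)
    (hmeas : ∀ i, Measurable (N i))
    (hindep : iIndepFun N μ)
    (hident : ∀ i, IdentDistrib (N i) (N 0) μ μ)
    (hmean : ∫ ω, N 0 ω ∂μ = 0)
    (hvar : ∫ ω, (N 0 ω) ^ 2 ∂μ = σ2)
    (h4 : Integrable (fun ω => (N 0 ω) ^ 4) μ)
    (hxbd : ∃ C, ∀ i, |x i| ≤ C)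
    (hcesaro : Filter.Tendsto
      (fun m : ℕ => (m : ℝ)⁻¹ * ∑ i ∈ Finset.range m, ((1 - a) * x i - b) ^ 2)
      Filter.atTop (nhds c)) :
    TendstoInMeasure μ
      (fun (m : ℕ) (ω : Ω) => (m : ℝ)⁻¹ * ∑ i ∈ Finset.range m,
        (((x i + N i ω) - (a * (x i + N i ω) + b)) ^ 2 + 2 * a * σ2))
      Filter.atTop
      (fun _ => c + a ^ 2 * σ2 + σ2) := by
  obtain ⟨C, hC⟩ := hxbd
  set d : ℝ := 1 - a with hd
  set e : ℝ := 2 * a * σ2 with he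
  set w : ℕ → ℝ := fun i => d * x i - b with hwdef
  set Y : ℕ → Ω → ℝ := fun i ω => ((x i + N i ω) - (a * (x i + N i ω) + b)) ^ 2 + e with hY
  have hYeq : ∀ i ω, Y i ω = (w i + d * N i ω) ^ 2 + e := by
    intro i ω; simp only [hY, hwdef, hd]; ring_nf
  -- integrability facts about N i
  have hN4 : ∀ i, Integrable (fun ω => (N i ω) ^ 4) μ := by
    intro i
    exact ((hident i).comp (measurable_id.pow_const 4)).integrable_iff.2 h4
  have hN2 : ∀ i, Integrable (fun ω => (N i ω) ^ 2) μ := by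
    intro i
    refine ((integrable_const 1).add (hN4 i)).mono'
      (((hmeas i).pow_const 2).aestronglyMeasurable) ?_
    filter_upwards with ω
    have hn := sq_nonneg (N i ω ^ 2 - 1)
    simp only [Real.norm_eq_abs, Pi.add_apply, abs_of_nonneg (sq_nonneg (N i ω))]
    nlinarith [sq_nonneg (N i ω)]
  have hN1 : ∀ i, Integrable (N i) μ := by
    intro i
    refine ((integrable_const 1).add (hN2 i)).mono' ((hmeas i).aestronglyMeasurable) ?_
    filter_upwards with ω
    have := sq_nonneg (|N i ω| - 1)
    simp only [Real.norm_eq_abs, Pi.add_apply]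
    nlinarith [sq_abs (N i ω)]
  -- integrals
  have hNmean : ∀ i, ∫ ω, N i ω ∂μ = 0 := fun i => (hident i).integral_eq.trans hmean
  have hNvar : ∀ i, ∫ ω, (N i ω) ^ 2 ∂μ = σ2 := by
    intro i
    exact (((hident i).comp (measurable_id.pow_const 2)).integral_eq).trans hvar
  have hN4eq : ∀ i, ∫ ω, (N i ω) ^ 4 ∂μ = ∫ ω, (N 0 ω) ^ 4 ∂μ := by
    intro i
    exact ((hident i).comp (measurable_id.pow_const 4)).integral_eq
  -- expectation of Y i
  have hEY : ∀ i, ∫ ω, Y i ω ∂μ = w i ^ 2 + (1 + a ^ 2) * σ2 := by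
    intro i
    have hexp : ∀ ω, Y i ω =
        (w i ^ 2 + e) + ((2 * w i * d) * N i ω + d ^ 2 * (N i ω) ^ 2) := by
      intro ω; rw [hYeq]; ring
    calc ∫ ω, Y i ω ∂μ
        = ∫ ω, ((w i ^ 2 + e) + ((2 * w i * d) * N i ω + d ^ 2 * (N i ω) ^ 2)) ∂μ :=
          integral_congr_ae (Filter.Eventually.of_forall hexp)
      _ = (w i ^ 2 + e) + ((2 * w i * d) * ∫ ω, N i ω ∂μ + d ^ 2 * ∫ ω, (N i ω) ^ 2 ∂μ) := by
          have hg1 : Integrable (fun ω => 2 * w i * d * N i ω) μ := (hN1 i).const_mul _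
          have hg2 : Integrable (fun ω => d ^ 2 * (N i ω) ^ 2) μ := (hN2 i).const_mul _
          have hg : Integrable (fun ω => 2 * w i * d * N i ω + d ^ 2 * (N i ω) ^ 2) μ :=
            hg1.add hg2
          rw [integral_add (integrable_const _) hg, integral_add hg1 hg2,
            integral_const_mul, integral_const_mul, integral_const]
          simp
      _ = w i ^ 2 + (1 + a ^ 2) * σ2 := by
          rw [hNmean i, hNvar i]; simp only [he, hd]; ring
  -- measurability of Y
  have hYmeas : ∀ i, Measurable (Y i) := by
    intro i
    simp only [hY]
    exact (((measurable_const.add (hmeas i)).sub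
      (((measurable_const.add (hmeas i)).const_mul a).add_const b)).pow_const 2).add_const e
  -- uniform bounds
  set W : ℝ := |d| * C + |b| with hW
  have hwbd : ∀ i, |w i| ≤ W := by
    intro i
    calc |w i| = |d * x i + -b| := by rw [hwdef]; ring_nf
      _ ≤ |d * x i| + |(-b)| := abs_add_le _ _
      _ ≤ |d| * C + |b| := by
          rw [abs_mul, abs_neg]
          exact add_le_add (mul_le_mul_of_nonneg_left (hC i) (abs_nonneg d)) le_rfl
      _ = W := rfl
  set K : ℝ := 2 * (2 * W ^ 2 + |e|) ^ 2 + 2 * (2 * d ^ 2) ^ 2 with hK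
  have hK0 : 0 ≤ K := by positivity
  have hYsqbd : ∀ i ω, ‖(Y i ω) ^ 2‖ ≤ K * (1 + (N i ω) ^ 4) := by
    intro i ω
    rw [Real.norm_eq_abs, abs_of_nonneg (sq_nonneg _), hYeq]
    exact stmt17_aux_ptwise W e d (w i) (N i ω) (hwbd i)
  have hgK : ∀ i, Integrable (fun ω => K * (1 + (N i ω) ^ 4)) μ :=
    fun i => (((integrable_const 1).add (hN4 i)).const_mul K)
  have hYsqInt : ∀ i, Integrable (fun ω => (Y i ω) ^ 2) μ := by
    intro i
    refine (hgK i).mono' (((hYmeas i).pow_const 2).aestronglyMeasurable) ?_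
    exact Filter.Eventually.of_forall (hYsqbd i)
  have hYmem : ∀ i, MemLp (Y i) 2 μ := fun i =>
    (memLp_two_iff_integrable_sq (hYmeas i).aestronglyMeasurable).2 (hYsqInt i)
  -- variance bound
  set I4 : ℝ := ∫ ω, (N 0 ω) ^ 4 ∂μ with hI4
  have hI40 : 0 ≤ I4 := integral_nonneg fun ω => by positivity
  set KV : ℝ := K * (1 + I4) with hKV
  have hKV0 : 0 ≤ KV := by positivity
  have hVarY : ∀ i, variance (Y i) μ ≤ KV := by
    intro i
    refine le_trans (variance_le_expectation_sq (hYmeas i).aestronglyMeasurable) ?_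
    have h1 : ∫ ω, (Y i ω) ^ 2 ∂μ ≤ ∫ ω, K * (1 + (N i ω) ^ 4) ∂μ := by
      refine integral_mono (hYsqInt i) (hgK i) ?_
      intro ω
      exact le_trans (le_abs_self _) (hYsqbd i ω)
    have h2 : ∫ ω, K * (1 + (N i ω) ^ 4) ∂μ = KV := by
      rw [integral_const_mul, integral_add (integrable_const 1) (hN4 i), integral_const,
        hN4eq i]
      simp [hKV, hI4]
    calc ∫ ω, ((Y i) ^ 2) ω ∂μ = ∫ ω, (Y i ω) ^ 2 ∂μ := rfl
      _ ≤ ∫ ω, K * (1 + (N i ω) ^ 4) ∂μ := h1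
      _ = KV := h2
  -- independence of the Y i
  have hYindep : ∀ i j, i ≠ j → IndepFun (Y i) (Y j) μ := by
    intro i j hij
    have hgm : ∀ k : ℕ, Measurable (fun t : ℝ => ((x k + t) - (a * (x k + t) + b)) ^ 2 + e) := by
      intro k
      exact (((measurable_const.add measurable_id).sub
        (((measurable_const.add measurable_id).const_mul a).add_const b)).pow_const 2).add_const e
    exact (hindep.indepFun hij).comp (hgm i) (hgm j)
  have hVarSum : ∀ m : ℕ, variance (∑ i ∈ Finset.range m, Y i) μ
      = ∑ i ∈ Finset.range m, variance (Y i) μ := by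
    intro m
    exact IndepFun.variance_sum (fun i _ => hYmem i)
      (fun i _ j _ hij => hYindep i j hij)
  -- expectation of the empirical average
  have hEf : ∀ m : ℕ, 1 ≤ m →
      ∫ ω, ((m : ℝ)⁻¹ * ∑ i ∈ Finset.range m, Y i ω) ∂μ
        = (m : ℝ)⁻¹ * (∑ i ∈ Finset.range m, (w i) ^ 2) + (1 + a ^ 2) * σ2 := by
    intro m hm
    have hmne : (m : ℝ) ≠ 0 := Nat.cast_ne_zero.2 (by omega)
    rw [integral_const_mul, integral_finset_sum _ (fun i _ => (hYmem i).integrable one_le_two)]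
    rw [Finset.sum_congr rfl (fun i _ => hEY i), Finset.sum_add_distrib, Finset.sum_const,
      Finset.card_range, mul_add, nsmul_eq_mul, ← mul_assoc, inv_mul_cancel₀ hmne, one_mul]
  -- convergence of the expectations
  have hEtend : Filter.Tendsto
      (fun m : ℕ => ∫ ω, ((m : ℝ)⁻¹ * ∑ i ∈ Finset.range m, Y i ω) ∂μ)
      Filter.atTop (nhds (c + a ^ 2 * σ2 + σ2)) := by
    have h1 : Filter.Tendsto
        (fun m : ℕ => (m : ℝ)⁻¹ * (∑ i ∈ Finset.range m, (w i) ^ 2) + (1 + a ^ 2) * σ2)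
        Filter.atTop (nhds (c + (1 + a ^ 2) * σ2)) := hcesaro.add_const _
    have h2 : c + (1 + a ^ 2) * σ2 = c + a ^ 2 * σ2 + σ2 := by ring
    rw [h2] at h1
    refine h1.congr' ?_
    filter_upwards [Filter.eventually_ge_atTop 1] with m hm
    exact (hEf m hm).symm
  -- the main estimate
  refine tendstoInMeasure_iff_dist.2 fun ε hε => ?_
  have hε2 : 0 < ε / 2 := by positivity
  have hb : Filter.Tendsto (fun m : ℕ => ENNReal.ofReal ((KV / m) / (ε / 2) ^ 2))
      Filter.atTop (nhds 0) := by
    have h1 : Filter.Tendsto (fun m : ℕ => (KV / m) / (ε / 2) ^ 2)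
        Filter.atTop (nhds 0) := by
      have := (tendsto_const_div_atTop_nhds_zero_nat KV).div_const ((ε / 2) ^ 2)
      simpa using this
    have h2 := ENNReal.tendsto_ofReal h1
    simpa using h2
  refine tendsto_of_tendsto_of_tendsto_of_le_of_le' tendsto_const_nhds hb
    (Filter.Eventually.of_forall fun m => zero_le) ?_
  have hball := hEtend (Metric.ball_mem_nhds (c + a ^ 2 * σ2 + σ2) hε2)
  filter_upwards [Filter.eventually_ge_atTop 1, hball] with m hm hdist
  have hmne : (m : ℝ) ≠ 0 := Nat.cast_ne_zero.2 (by omega)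
  have hmpos : (0 : ℝ) < m := by
    have : (1 : ℝ) ≤ (m : ℝ) := by exact_mod_cast hm
    linarith
  -- Memℒp of the empirical average
  have hsum_eq : (fun ω => (m : ℝ)⁻¹ * ∑ i ∈ Finset.range m, Y i ω)
      = fun ω => (m : ℝ)⁻¹ * (∑ i ∈ Finset.range m, Y i) ω := by
    funext ω; rw [Finset.sum_apply]
  have hfm : MemLp (fun ω => (m : ℝ)⁻¹ * ∑ i ∈ Finset.range m, Y i ω) 2 μ := by
    rw [hsum_eq]
    exact (memLp_finset_sum' _ (fun i _ => hYmem i)).const_mul _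
  -- variance of the empirical average
  have hvarf : variance (fun ω => (m : ℝ)⁻¹ * ∑ i ∈ Finset.range m, Y i ω) μ ≤ KV / m := by
    rw [hsum_eq, variance_const_mul, hVarSum]
    have hsle : ∑ i ∈ Finset.range m, variance (Y i) μ ≤ m * KV := by
      calc ∑ i ∈ Finset.range m, variance (Y i) μ ≤ ∑ _i ∈ Finset.range m, KV :=
            Finset.sum_le_sum fun i _ => hVarY i
        _ = m * KV := by rw [Finset.sum_const, Finset.card_range, nsmul_eq_mul]
    calc ((m : ℝ)⁻¹) ^ 2 * ∑ i ∈ Finset.range m, variance (Y i) μ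
        ≤ ((m : ℝ)⁻¹) ^ 2 * (m * KV) := by
          refine mul_le_mul_of_nonneg_left hsle (by positivity)
      _ = KV / m := by field_simp
  -- Chebyshev
  have hcheb := meas_ge_le_variance_div_sq (μ := μ)
    (X := fun ω => (m : ℝ)⁻¹ * ∑ i ∈ Finset.range m, Y i ω) hfm hε2
  have hsub : {ω | ε ≤ dist ((m : ℝ)⁻¹ * ∑ i ∈ Finset.range m, Y i ω)
        (c + a ^ 2 * σ2 + σ2)}
      ⊆ {ω | ε / 2 ≤ |(m : ℝ)⁻¹ * (∑ i ∈ Finset.range m, Y i ω)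
        - ∫ ω', ((m : ℝ)⁻¹ * ∑ i ∈ Finset.range m, Y i ω') ∂μ|} := by
    intro ω hω
    simp only [Set.mem_setOf_eq, Real.dist_eq] at hω ⊢
    have hd2 : |(∫ ω', ((m : ℝ)⁻¹ * ∑ i ∈ Finset.range m, Y i ω') ∂μ)
        - (c + a ^ 2 * σ2 + σ2)| < ε / 2 := by
      simpa [Metric.mem_ball, Real.dist_eq] using hdist
    have htri : |(m : ℝ)⁻¹ * (∑ i ∈ Finset.range m, Y i ω) - (c + a ^ 2 * σ2 + σ2)|
        ≤ |(m : ℝ)⁻¹ * (∑ i ∈ Finset.range m, Y i ω)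
            - ∫ ω', ((m : ℝ)⁻¹ * ∑ i ∈ Finset.range m, Y i ω') ∂μ|
          + |(∫ ω', ((m : ℝ)⁻¹ * ∑ i ∈ Finset.range m, Y i ω') ∂μ)
            - (c + a ^ 2 * σ2 + σ2)| := abs_sub_le _ _ _
    linarith
  calc μ {ω | ε ≤ dist ((m : ℝ)⁻¹ * ∑ i ∈ Finset.range m, Y i ω) (c + a ^ 2 * σ2 + σ2)}
      ≤ μ {ω | ε / 2 ≤ |(m : ℝ)⁻¹ * (∑ i ∈ Finset.range m, Y i ω)
          - ∫ ω', ((m : ℝ)⁻¹ * ∑ i ∈ Finset.range m, Y i ω') ∂μ|} := measure_mono hsub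
    _ ≤ ENNReal.ofReal
        (variance (fun ω => (m : ℝ)⁻¹ * ∑ i ∈ Finset.range m, Y i ω) μ / (ε / 2) ^ 2) := hcheb
    _ ≤ ENNReal.ofReal ((KV / m) / (ε / 2) ^ 2) := by
        refine ENNReal.ofReal_le_ofReal ?_
        exact div_le_div_of_nonneg_right hvarf (by positivity) |>.trans_eq rfl
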